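/- arXiv:1806.05702 — 2 statements merged into one kernel-verified Lean document; each statement's English description precedes it below -/
import Mathlib

section
/- For 0 < H < 1, the points t = 1/3 and t = 2/3 are the unique maximizers of the Takagi–Landsberg function x^H on [0,1]. -/
open Filter Finset Set MeasureTheory ProbabilityTheory

noncomputable def e00 (t : ℝ) : ℝ := max (min t (1 - t)) 0

noncomputable def fs (m : ℕ) (k : ℤ) (t : ℝ) : ℝ :=
  (2 : ℝ) ^ (-(m : ℝ) / 2) * e00 ((2 : ℝ) ^ m * t - (k : ℝ))

def IsSign (θ : ℕ → ℕ → ℝ) : Prop := ∀ m k, θ m k = 1 ∨ θ m k = -1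

noncomputable def tlTerm (H : ℝ) (θ : ℕ → ℕ → ℝ) (m : ℕ) (t : ℝ) : ℝ :=
  (2 : ℝ) ^ ((m : ℝ) * (1 / 2 - H)) *
    ∑ k ∈ Finset.range (2 ^ m), θ m k * fs m (k : ℤ) t

noncomputable def sPartial (H : ℝ) (θ : ℕ → ℕ → ℝ) (n : ℕ) (t : ℝ) : ℝ :=
  ∑ m ∈ Finset.range n, tlTerm H θ m t

def MemX (H : ℝ) (x : ℝ → ℝ) : Prop :=
  ∃ θ : ℕ → ℕ → ℝ, IsSign θ ∧ ∀ t : ℝ, x t = ∑' m : ℕ, tlTerm H θ m t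

noncomputable def xTL (H : ℝ) (t : ℝ) : ℝ := ∑' m : ℕ, tlTerm H (fun _ _ => 1) m t

noncomputable def dyadicSum (p : ℝ) (x : ℝ → ℝ) (n : ℕ) (t : ℝ) : ℝ :=
  ∑ k ∈ Finset.range (2 ^ n),
    if (k : ℝ) / 2 ^ n ≤ t then |x (((k : ℝ) + 1) / 2 ^ n) - x ((k : ℝ) / 2 ^ n)| ^ p else 0

noncomputable def nuFloor (h : ℝ) : ℤ := ⌊-(Real.logb 2 h)⌋

noncomputable def omegaH (H h : ℝ) : ℝ :=
  h * (2 : ℝ) ^ (((nuFloor h : ℝ) - 1) * (1 - H)) / ((2 : ℝ) ^ (1 - H) - 1) +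
    (2 : ℝ) ^ ((1 - (nuFloor h : ℝ)) * H) / (3 * (1 - (2 : ℝ) ^ (-H)))


noncomputable def D (s : ℝ) : ℝ := e00 (Int.fract s)

lemma e00_eq_min {u : ℝ} (h0 : 0 ≤ u) (h1 : u ≤ 1) : e00 u = min u (1 - u) := by
  unfold e00
  rw [max_eq_left (le_min h0 (by linarith))]

lemma e00_of_nonpos {u : ℝ} (h : u ≤ 0) : e00 u = 0 := by
  unfold e00
  rw [max_eq_right (min_le_of_left_le h)]

lemma e00_of_one_le {u : ℝ} (h : 1 ≤ u) : e00 u = 0 := by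
  unfold e00
  rw [max_eq_right (min_le_of_right_le (by linarith))]

lemma D_nonneg (s : ℝ) : 0 ≤ D s := le_max_right _ _

lemma D_le_half (s : ℝ) : D s ≤ 1/2 := by
  unfold D e00
  rcases le_total (Int.fract s) (1/2) with h | h
  · exact max_le (min_le_left _ _ |>.trans h) (by norm_num)
  · exact max_le ((min_le_right _ _).trans (by linarith)) (by norm_num)

lemma D_eq (s : ℝ) : D s = min (Int.fract s) (1 - Int.fract s) :=
  e00_eq_min (Int.fract_nonneg s) (Int.fract_lt_one s).le

lemma D_double (s : ℝ) : D (2 * s) = min (2 * D s) (1 - 2 * D s) := by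
  have hu0 := Int.fract_nonneg s
  have hu1 := Int.fract_lt_one s
  set u := Int.fract s with hu
  have h2s : Int.fract (2 * s) = Int.fract (2 * u) := by
    have : 2 * s = (2 * ⌊s⌋ : ℤ) + 2 * u := by
      rw [hu]; push_cast [Int.fract]; ring
    rw [this, Int.fract_intCast_add]
  have hDs : D s = min u (1 - u) := D_eq s
  rcases lt_trichotomy u (1/2) with h | h | h
  · have hDs' : D s = u := by rw [hDs, min_eq_left (by linarith)]
    have hf : Int.fract (2 * u) = 2 * u := Int.fract_eq_self.mpr ⟨by linarith, by linarith⟩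
    rw [D, h2s, hf, e00_eq_min (by linarith) (by linarith), hDs']
  · have hDs' : D s = 1/2 := by rw [hDs, h]; norm_num
    have hf : Int.fract (2 * u) = 0 := by rw [h]; norm_num
    rw [D, h2s, hf, hDs']
    norm_num [e00]
  · have hDs' : D s = 1 - u := by rw [hDs, min_eq_right (by linarith)]
    have hf : Int.fract (2 * u) = 2 * u - 1 := by
      rw [show (2:ℝ) * u = (2 * u - 1) + ((1:ℤ):ℝ) by push_cast; ring, Int.fract_add_intCast,
        Int.fract_eq_self.mpr ⟨by linarith, by linarith⟩]
      push_cast; ring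
    rw [D, h2s, hf, e00_eq_min (by linarith) (by linarith), hDs', min_comm]
    ring_nf

lemma sum_e00 {t : ℝ} (ht : t ∈ Set.Icc (0:ℝ) 1) (m : ℕ) :
    ∑ k ∈ Finset.range (2^m), e00 ((2:ℝ)^m * t - (k:ℝ)) = D ((2:ℝ)^m * t) := by
  obtain ⟨ht0, ht1⟩ := ht
  set s : ℝ := (2:ℝ)^m * t with hs
  have hs0 : 0 ≤ s := by positivity
  have h2m : (0:ℝ) < 2^m := by positivity
  have hs1 : s ≤ 2^m := by
    rw [hs]; nlinarith
  rcases eq_or_lt_of_le hs1 with he | hlt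
  · rw [he]
    have : D ((2:ℝ)^m) = 0 := by
      rw [D, show ((2:ℝ)^m) = ((2^m : ℤ) : ℝ) by push_cast; ring, Int.fract_intCast]
      simp [e00]
    rw [this]
    apply Finset.sum_eq_zero
    intro k hk
    apply e00_of_one_le
    have : (k:ℝ) ≤ (2:ℝ)^m - 1 := by
      have := Finset.mem_range.mp hk
      have : (k:ℝ) + 1 ≤ (2^m : ℕ) := by exact_mod_cast this
      push_cast at this ⊢
      linarith
    linarith
  · have hfl0 : 0 ≤ ⌊s⌋ := Int.floor_nonneg.mpr hs0
    set K : ℕ := ⌊s⌋.toNat with hK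
    have hKf : (K : ℝ) = (⌊s⌋ : ℝ) := by
      rw [hK]
      exact_mod_cast congrArg (fun z : ℤ => (z : ℝ)) (Int.toNat_of_nonneg hfl0)
    have hKmem : K ∈ Finset.range (2^m) := by
      rw [Finset.mem_range]
      have : ⌊s⌋ < (2^m : ℤ) := by
        apply Int.floor_lt.mpr; push_cast; exact hlt
      have h2 : ⌊s⌋ < ((2^m : ℕ) : ℤ) := by exact_mod_cast this
      omega
    have hfr : s - K = Int.fract s := by rw [hKf]; exact (Int.self_sub_floor s).symm ▸ rfl
    rw [Finset.sum_eq_single_of_mem K hKmem]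
    · rw [hfr]; rfl
    · intro j _ hj
      rcases lt_or_gt_of_ne hj with h | h
      · apply e00_of_one_le
        have : (j:ℝ) + 1 ≤ K := by exact_mod_cast h
        have hf := Int.fract_nonneg s
        rw [← hfr] at hf
        linarith
      · apply e00_of_nonpos
        have : (K:ℝ) + 1 ≤ j := by exact_mod_cast h
        have hf := Int.fract_lt_one s
        rw [← hfr] at hf
        linarith

lemma tlTerm_eq (H : ℝ) {t : ℝ} (ht : t ∈ Set.Icc (0:ℝ) 1) (m : ℕ) :
    tlTerm H (fun _ _ => 1) m t = ((2:ℝ) ^ (-H)) ^ m * D ((2:ℝ)^m * t) := by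
  have h1 : ∀ k ∈ Finset.range (2^m), (fun _ _ => (1:ℝ)) m k * fs m (k : ℤ) t
      = (2 : ℝ) ^ (-(m : ℝ) / 2) * e00 ((2:ℝ)^m * t - (k:ℝ)) := by
    intro k _
    simp [fs]
  rw [tlTerm, Finset.sum_congr rfl h1, ← Finset.mul_sum, sum_e00 ht m, ← mul_assoc,
    ← Real.rpow_add (by norm_num : (0:ℝ) < 2),
    show (m:ℝ) * (1/2 - H) + -(m:ℝ)/2 = (-H) * (m:ℝ) by ring,
    Real.rpow_mul (by norm_num : (0:ℝ) ≤ 2), Real.rpow_natCast]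

noncomputable def cc' (a : ℝ) : ℕ → ℝ
  | 0 => 1/2
  | (m+1) => (a^(m+1) - cc' a m)/2

section CC
variable {a : ℝ} (ha1 : 1/2 < a) (ha2 : a < 1)
include ha1

lemma ha0 : 0 < a := by linarith

lemma cc_closed' (m : ℕ) :
    cc' a m = a^(m+1)/(2*a+1) + (-1/2:ℝ)^m/(2*(2*a+1)) := by
  have h : (2*a+1) ≠ 0 := by linarith
  induction m with
  | zero => show (1/2:ℝ) = _; field_simp; ring
  | succ n ih => show (a^(n+1) - cc' a n)/2 = _; rw [ih]; field_simp; ring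

omit ha1 in
lemma neg_half_pow_bounds (m : ℕ) :
    -((1/2:ℝ)^m) ≤ (-1/2:ℝ)^m ∧ (-1/2:ℝ)^m ≤ (1/2:ℝ)^m := by
  have habs : |(-1/2:ℝ)^m| = (1/2)^m := by
    rw [abs_pow, show |(-1/2:ℝ)| = 1/2 by norm_num]
  constructor
  · have := neg_abs_le ((-1/2:ℝ)^m); rw [habs] at this; exact this
  · have := le_abs_self ((-1/2:ℝ)^m); rw [habs] at this; exact this

lemma cc_pos' (m : ℕ) : 0 < cc' a m := by
  rw [cc_closed' ha1]
  obtain ⟨hb1, hb2⟩ := neg_half_pow_bounds m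
  have h1 : (1/2:ℝ)^(m+1) < a^(m+1) := pow_lt_pow_left₀ ha1 (by norm_num) (by omega)
  have h2 : (0:ℝ) < 2*a+1 := by linarith
  have h3 : (1/2:ℝ)^(m+1) = (1/2)^m * (1/2) := by ring
  rw [div_add_div _ _ (by linarith) (by linarith)]
  apply div_pos _ (by nlinarith)
  nlinarith
  
lemma cc_le' (m : ℕ) : cc' a m ≤ a^m / 2 := by
  rw [cc_closed' ha1]
  obtain ⟨hb1, hb2⟩ := neg_half_pow_bounds m
  have h1 : (1/2:ℝ)^m ≤ a^m := pow_le_pow_left₀ (by norm_num) (by linarith) m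
  have h2 : (0:ℝ) < 2*a+1 := by linarith
  have h4 : a^(m+1) = a * a^m := by ring
  rw [div_add_div _ _ (by linarith) (by linarith), div_le_div_iff₀ (by nlinarith) (by norm_num)]
  nlinarith [pow_pos (ha0 ha1) m]

omit ha1 in
lemma cc_rec' (m : ℕ) : 2 * cc' a (m+1) + cc' a m = a^(m+1) := by
  show 2 * ((a^(m+1) - cc' a m)/2) + cc' a m = a^(m+1); ring

include ha2

lemma summable_cc' : Summable (cc' a) :=
  Summable.of_nonneg_of_le (fun m => (cc_pos' ha1 m).le) (fun m => (cc_le' ha1 m).trans (by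
    nlinarith [pow_pos (ha0 ha1) m]))
    (summable_geometric_of_lt_one (ha0 ha1).le ha2)

lemma tsum_cc' : ∑' m, cc' a m = 1/(3*(1-a)) := by
  have h : ∀ m : ℕ, cc' a m = (a/(2*a+1)) * a^m + (1/(2*(2*a+1))) * (-1/2:ℝ)^m := by
    intro m
    rw [cc_closed' ha1]
    have h2 : (2*a+1) ≠ 0 := by linarith
    field_simp
    ring
  have hs1 : Summable (fun m : ℕ => (a/(2*a+1)) * a^m) :=
    (summable_geometric_of_lt_one (ha0 ha1).le ha2).mul_left _
  have hs2 : Summable (fun m : ℕ => (1/(2*(2*a+1))) * (-1/2:ℝ)^m) := by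
    apply Summable.mul_left
    apply summable_geometric_of_norm_lt_one
    rw [Real.norm_eq_abs, abs_div]; norm_num
  rw [tsum_congr h, Summable.tsum_add hs1 hs2, tsum_mul_left, tsum_mul_left,
    tsum_geometric_of_lt_one (ha0 ha1).le ha2,
    tsum_geometric_of_norm_lt_one (by rw [Real.norm_eq_abs, abs_div]; norm_num : ‖(-1/2:ℝ)‖ < 1)]
  have h2 : (2*a+1) ≠ 0 := by linarith
  have h3 : (1-a) ≠ 0 := by linarith
  have : (1 - (-1/2:ℝ)) = 3/2 := by norm_num
  rw [this]
  field_simp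
  ring

end CC

section Key
variable {a : ℝ} (ha1 : 1/2 < a) (ha2 : a < 1) {x : ℕ → ℝ}
  (hx0 : ∀ m, 0 ≤ x m) (hxh : ∀ m, x m ≤ 1/2)
include ha1 ha2 hx0 hxh

lemma sum_ax : Summable (fun m => a^m * x m) := by
  apply Summable.of_nonneg_of_le (fun m => mul_nonneg (pow_nonneg (by linarith) m) (hx0 m))
    (fun m => ?_) (summable_geometric_of_lt_one (by linarith) ha2)
  have := pow_nonneg (show (0:ℝ) ≤ a by linarith) m
  nlinarith [hxh m]

lemma sum_ccx : Summable (fun m => cc' a m * x m) := by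
  apply Summable.of_nonneg_of_le
    (fun m => mul_nonneg (cc_pos' ha1 m).le (hx0 m)) (fun m => ?_)
    (summable_geometric_of_lt_one (by linarith) ha2)
  have := pow_nonneg (show (0:ℝ) ≤ a by linarith) m
  nlinarith [hxh m, hx0 m, cc_le' ha1 m, cc_pos' ha1 m]

lemma sum_ccx' : Summable (fun m => cc' a m * x (m+1)) := by
  apply Summable.of_nonneg_of_le
    (fun m => mul_nonneg (cc_pos' ha1 m).le (hx0 (m+1))) (fun m => ?_)
    (summable_geometric_of_lt_one (by linarith) ha2)
  have := pow_nonneg (show (0:ℝ) ≤ a by linarith) m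
  nlinarith [hxh (m+1), hx0 (m+1), cc_le' ha1 m, cc_pos' ha1 m]

lemma sum_ccy (hy : ∀ m, 2 * x m + x (m+1) ≤ 1) :
    Summable (fun m => cc' a m * (2 * x m + x (m+1))) := by
  have : (fun m => cc' a m * (2 * x m + x (m+1)))
      = fun m => 2 * (cc' a m * x m) + cc' a m * x (m+1) := by
    funext m; ring
  rw [this]
  exact ((sum_ccx ha1 ha2 hx0 hxh).mul_left 2).add (sum_ccx' ha1 ha2 hx0 hxh)

lemma key_identity :
    ∑' m, a^m * x m = ∑' m, cc' a m * (2 * x m + x (m+1)) := by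
  set F : ℕ → ℝ := fun m => if m = 0 then 0 else cc' a (m-1) * x m with hF
  have hF1 : ∀ m, F (m+1) = cc' a m * x (m+1) := by intro m; simp [hF]
  have hsF : Summable F := by
    apply Summable.of_nonneg_of_le (g := F) (f := fun m => 2 * a^m) _ _
      ((summable_geometric_of_lt_one (by linarith) ha2).mul_left 2)
    · intro m
      match m with
      | 0 => simp [hF]
      | (n+1) =>
        rw [hF1]
        exact mul_nonneg (cc_pos' ha1 n).le (hx0 (n+1))
    · intro m
      match m with
      | 0 => norm_num [hF]
      | (n+1) =>
        rw [hF1]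
        have h1 := pow_nonneg (show (0:ℝ) ≤ a by linarith) n
        have h2 : a^(n+1) = a * a^n := by ring
        have h3 : cc' a n * x (n+1) ≤ (a^n/2)*(1/2) :=
          mul_le_mul (cc_le' ha1 n) (hxh (n+1)) (hx0 (n+1)) (by positivity)
        show cc' a n * x (n+1) ≤ 2 * a^(n+1)
        nlinarith [h3, mul_nonneg (show (0:ℝ) ≤ a - 1/2 by linarith) h1]
  have e3 : ∑' m, cc' a m * (2 * x m + x (m+1))
      = ∑' m, (2 * (cc' a m * x m) + F m) := by
    rw [Summable.tsum_add ((sum_ccx ha1 ha2 hx0 hxh).mul_left 2) hsF]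
    have e4 : ∑' m, F m = F 0 + ∑' m, F (m+1) := Summable.tsum_eq_zero_add hsF
    have : ∑' m, F (m+1) = ∑' m, cc' a m * x (m+1) := tsum_congr (fun m => hF1 m)
    have hF0 : F 0 = 0 := by simp [hF]
    rw [e4, this, hF0, zero_add,
      ← Summable.tsum_add ((sum_ccx ha1 ha2 hx0 hxh).mul_left 2) (sum_ccx' ha1 ha2 hx0 hxh)]
    exact tsum_congr (fun m => by ring)
  rw [e3]
  apply tsum_congr
  intro m
  match m with
  | 0 =>
    show a^0 * x 0 = 2 * (cc' a 0 * x 0) + F 0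
    have hF0 : F 0 = 0 := by simp [hF]
    have hcc0 : cc' a 0 = 1/2 := rfl
    rw [hF0, hcc0]; ring
  | (n+1) => rw [hF1, ← cc_rec' (a := a) n]; ring

lemma key_le (hy : ∀ m, 2 * x m + x (m+1) ≤ 1) :
    ∑' m, a^m * x m ≤ 1/(3*(1-a)) := by
  rw [key_identity ha1 ha2 hx0 hxh, ← tsum_cc' ha1 ha2]
  apply Summable.tsum_le_tsum _ (sum_ccy ha1 ha2 hx0 hxh hy) (summable_cc' ha1 ha2)
  intro m
  exact mul_le_of_le_one_right (cc_pos' ha1 m).le (hy m)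

lemma key_eq (hy : ∀ m, 2 * x m + x (m+1) ≤ 1)
    (heq : ∑' m, a^m * x m = 1/(3*(1-a))) :
    ∀ m, 2 * x m + x (m+1) = 1 := by
  by_contra hc
  push_neg at hc
  obtain ⟨m0, hm0⟩ := hc
  have hsd : Summable (fun m => cc' a m - cc' a m * (2 * x m + x (m+1))) :=
    (summable_cc' ha1 ha2).sub (sum_ccy ha1 ha2 hx0 hxh hy)
  have h0 : ∑' m, (cc' a m - cc' a m * (2 * x m + x (m+1))) = 0 := by
    rw [Summable.tsum_sub (summable_cc' ha1 ha2) (sum_ccy ha1 ha2 hx0 hxh hy),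
      tsum_cc' ha1 ha2, ← key_identity ha1 ha2 hx0 hxh, heq, sub_self]
  have hpos : 0 < ∑' m, (cc' a m - cc' a m * (2 * x m + x (m+1))) := by
    apply Summable.tsum_pos hsd (fun m => ?_) m0
    · have h1 := cc_pos' (a := a) ha1 m0
      have h2 := lt_of_le_of_ne (hy m0) hm0
      nlinarith
    · have h1 := cc_pos' (a := a) ha1 m
      have h2 := hy m
      nlinarith
  linarith [h0 ▸ hpos]

lemma x0_eq (hmin : ∀ m, x (m+1) = min (2 * x m) (1 - 2 * x m))
    (heq : ∑' m, a^m * x m = 1/(3*(1-a))) : x 0 = 1/3 := by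
  have hy : ∀ m, 2 * x m + x (m+1) ≤ 1 := by
    intro m; have := min_le_right (2 * x m) (1 - 2 * x m); rw [← hmin m] at this; linarith
  have h1 := key_eq ha1 ha2 hx0 hxh hy heq
  have hiter : ∀ m, |x m - 1/3| = 2^m * |x 0 - 1/3| := by
    intro m
    induction m with
    | zero => simp
    | succ n ih =>
      have : x (n+1) - 1/3 = -2 * (x n - 1/3) := by have := h1 n; linarith
      rw [this, abs_mul, ih]
      norm_num
      ring
  by_contra hne
  have hd : 0 < |x 0 - 1/3| := abs_pos.mpr (sub_ne_zero.mpr hne)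
  obtain ⟨m, hm⟩ := pow_unbounded_of_one_lt ((1/2) / |x 0 - 1/3|) (by norm_num : (1:ℝ) < 2)
  have : 1/2 < 2^m * |x 0 - 1/3| := by
    rw [div_lt_iff₀ hd] at hm; linarith
  rw [← hiter m] at this
  have hb : |x m - 1/3| ≤ 1/2 := by
    rw [abs_le]; constructor <;> [linarith [hx0 m]; linarith [hxh m]]
  linarith

end Key

section Final

lemma third_seq {t : ℝ} (h0 : D t = 1/3) : ∀ m : ℕ, D ((2:ℝ)^m * t) = 1/3 := by
  intro m
  induction m with
  | zero => rw [pow_zero, one_mul]; exact h0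
  | succ n ih =>
    rw [show (2:ℝ)^(n+1) * t = 2 * ((2:ℝ)^n * t) by ring, D_double, ih]
    norm_num

lemma D_third : D (1/3 : ℝ) = 1/3 := by
  rw [D_eq, Int.fract_eq_self.mpr (by norm_num)]
  norm_num

lemma D_twothird : D (2/3 : ℝ) = 1/3 := by
  rw [D_eq, Int.fract_eq_self.mpr (by norm_num)]
  norm_num

theorem stmt3 (H : ℝ) (hH : H ∈ Set.Ioo (0:ℝ) 1) :
    {t : ℝ | t ∈ Set.Icc (0:ℝ) 1 ∧ ∀ s ∈ Set.Icc (0:ℝ) 1, xTL H s ≤ xTL H t}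
      = {1/3, 2/3} := by
  obtain ⟨hH0, hH1⟩ := hH
  set a : ℝ := (2:ℝ) ^ (-H) with haa
  have ha1 : 1/2 < a := by
    have h : (2:ℝ)^(-1:ℝ) < (2:ℝ)^(-H) := by
      apply Real.rpow_lt_rpow_left_iff (by norm_num : (1:ℝ) < 2) |>.mpr
      linarith
    rw [Real.rpow_neg_one] at h
    norm_num at h
    linarith
  have ha2 : a < 1 := Real.rpow_lt_one_of_one_lt_of_neg (by norm_num) (by linarith)
  set M : ℝ := 1/(3*(1-a)) with hM
  -- xTL as a tsum of a^m * D
  have hxtl : ∀ t ∈ Set.Icc (0:ℝ) 1, xTL H t = ∑' m, a^m * D ((2:ℝ)^m * t) := by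
    intro t ht
    exact tsum_congr (fun m => tlTerm_eq H ht m)
  -- value M is attained at points with D-orbit ≡ 1/3
  have hval : ∀ t : ℝ, D t = 1/3 → (∑' m, a^m * D ((2:ℝ)^m * t)) = M := by
    intro t h0
    have : ∀ m : ℕ, a^m * D ((2:ℝ)^m * t) = a^m * (1/3) := by
      intro m; rw [third_seq h0 m]
    rw [tsum_congr this, tsum_mul_right, tsum_geometric_of_lt_one (by linarith) ha2, hM]
    have : (1:ℝ) - a ≠ 0 := by linarith
    field_simp
  -- upper bound
  have hub : ∀ t ∈ Set.Icc (0:ℝ) 1, xTL H t ≤ M := by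
    intro t ht
    rw [hxtl t ht]
    apply key_le ha1 ha2 (fun m => D_nonneg _) (fun m => D_le_half _)
    intro m
    have h := D_double ((2:ℝ)^m * t)
    rw [show 2 * ((2:ℝ)^m * t) = (2:ℝ)^(m+1) * t by ring] at h
    have := min_le_right (2 * D ((2:ℝ)^m * t)) (1 - 2 * D ((2:ℝ)^m * t))
    rw [← h] at this
    linarith
  ext t
  simp only [Set.mem_setOf_eq, Set.mem_insert_iff, Set.mem_singleton_iff]
  constructor
  · rintro ⟨htI, hmax⟩
    have h13 : xTL H (1/3) = M := by
      rw [hxtl (1/3) (by norm_num)]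
      exact hval _ D_third
    have hMt : xTL H t = M :=
      le_antisymm (hub t htI) (h13 ▸ hmax (1/3) (by norm_num))
    have heq : ∑' m, a^m * D ((2:ℝ)^m * t) = M := by rw [← hxtl t htI]; exact hMt
    have hD0 : D t = 1/3 := by
      have := x0_eq ha1 ha2 (x := fun m => D ((2:ℝ)^m * t))
        (fun m => D_nonneg _) (fun m => D_le_half _)
        (fun m => by
          show D ((2:ℝ)^(m+1) * t) = min (2 * D ((2:ℝ)^m * t)) (1 - 2 * D ((2:ℝ)^m * t))
          rw [show (2:ℝ)^(m+1) * t = 2 * ((2:ℝ)^m * t) by ring, D_double])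
        heq
      simpa using this
    obtain ⟨ht0, ht1⟩ := htI
    rcases eq_or_lt_of_le ht1 with h1 | h1
    · exfalso
      rw [h1, D_eq] at hD0
      norm_num [Int.fract_one] at hD0
    · rw [D_eq, Int.fract_eq_self.mpr ⟨ht0, h1⟩] at hD0
      rcases le_total t (1/2) with h | h
      · left
        rw [min_eq_left (by linarith)] at hD0
        exact hD0
      · right
        rw [min_eq_right (by linarith)] at hD0
        linarith
  · rintro (rfl | rfl)
    · refine ⟨by norm_num, fun s hs => ?_⟩
      rw [hxtl (1/3) (by norm_num), hval _ D_third]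
      exact hub s hs
    · refine ⟨by norm_num, fun s hs => ?_⟩
      rw [hxtl (2/3) (by norm_num), hval _ D_twothird]
      exact hub s hs

end Final
end

section
/- For 0 < H < 1 and ω_H as defined, the modulus of continuity bound for x^H is sharp: limsup as h ↓ 0 of max over t ∈ [0,1−h] of |x^H(t+h) − x^H(t)| / ω_H(h) equals 1. -/
open Filter Finset Set MeasureTheory ProbabilityTheory

-- ## Auxiliary development

noncomputable def phiR (u : ℝ) : ℝ := |u - round u|

lemma phiR_nonneg (u : ℝ) : 0 ≤ phiR u := abs_nonneg _

lemma phiR_le_half (u : ℝ) : phiR u ≤ 1/2 := abs_sub_round u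

lemma phiR_le_abs_sub_int (u : ℝ) (n : ℤ) : phiR u ≤ |u - n| := by
  rcases eq_or_ne n (round u) with rfl | hne
  · exact le_of_eq rfl
  · have h1 : (1 : ℝ) ≤ |(n : ℝ) - round u| := by
      have : n - round u ≠ 0 := sub_ne_zero.2 hne
      have : (1 : ℤ) ≤ |n - round u| := Int.one_le_abs this
      calc (1:ℝ) = ((1:ℤ):ℝ) := by norm_num
        _ ≤ ((|n - round u| : ℤ) : ℝ) := by exact_mod_cast this
        _ = |(n:ℝ) - round u| := by push_cast [Int.cast_abs]; ring_nf
    have h2 : |u - round u| ≤ 1/2 := abs_sub_round u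
    have h3 : |(n:ℝ) - round u| ≤ |(n:ℝ) - u| + |u - round u| := by
      have := abs_sub_abs_le_abs_sub ((n:ℝ) - round u) ((n:ℝ) - u)
      calc |(n:ℝ) - round u| = |((n:ℝ) - u) + (u - round u)| := by ring_nf
        _ ≤ |(n:ℝ) - u| + |u - round u| := abs_add_le _ _
    have : (1:ℝ)/2 ≤ |(n:ℝ) - u| := by linarith
    rw [abs_sub_comm] at this
    calc phiR u ≤ 1/2 := abs_sub_round u
      _ ≤ |u - n| := this

lemma phiR_lipschitz (u v : ℝ) : |phiR u - phiR v| ≤ |u - v| := by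
  have h1 : phiR u ≤ |u - v| + phiR v := by
    calc phiR u ≤ |u - (round v : ℤ)| := phiR_le_abs_sub_int u (round v)
      _ = |(u - v) + (v - round v)| := by ring_nf
      _ ≤ |u - v| + |v - round v| := abs_add_le _ _
      _ = |u - v| + phiR v := rfl
  have h2 : phiR v ≤ |u - v| + phiR u := by
    calc phiR v ≤ |v - (round u : ℤ)| := phiR_le_abs_sub_int v (round u)
      _ = |(v - u) + (u - round u)| := by ring_nf
      _ ≤ |v - u| + |u - round u| := abs_add_le _ _
      _ = |u - v| + phiR u := by rw [abs_sub_comm]; rfl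
  rw [abs_sub_le_iff]; constructor <;> linarith

lemma phiR_int_add (u : ℝ) (n : ℤ) : phiR (u + n) = phiR u := by
  rw [phiR, phiR, round_add_intCast]; push_cast; ring_nf

lemma phiR_eq_min (u : ℝ) (h0 : 0 ≤ u) (h1 : u ≤ 1) : phiR u = min u (1 - u) := by
  rcases eq_or_lt_of_le h1 with h | h
  · subst h; rw [phiR]; norm_num
  · rw [phiR, abs_sub_round_eq_min, Int.fract_eq_self.2 ⟨h0, h⟩]

lemma phiR_eq_self (u : ℝ) (h0 : 0 ≤ u) (h1 : u ≤ 1/2) : phiR u = u := by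
  rw [phiR_eq_min u h0 (by linarith), min_eq_left (by linarith)]

lemma phiR_double (u : ℝ) : phiR (2 * u) = min (2 * phiR u) (1 - 2 * phiR u) := by
  have key : ∀ g : ℝ, 0 ≤ g → g < 1 →
      phiR (2 * g) = min (2 * phiR g) (1 - 2 * phiR g) := by
    intro g hg0 hg1
    rcases le_or_gt g (1/2) with hg | hg
    · rw [phiR_eq_self g hg0 hg, phiR_eq_min (2*g) (by linarith) (by linarith)]
    · have hphig : phiR g = 1 - g := by
        rw [phiR_eq_min g hg0 hg1.le, min_eq_right (by linarith)]
      have : phiR (2 * g) = phiR (2 * g - 1) := by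
        have h' := phiR_int_add (2 * g - 1) 1
        rw [show (2*g - 1 + ((1:ℤ):ℝ)) = 2*g by push_cast; ring] at h'
        exact h'
      rw [this, hphig]
      rw [phiR_eq_min (2*g-1) (by linarith) (by linarith)]
      rw [min_comm]
      congr 1 <;> ring
  have h1 : phiR u = phiR (Int.fract u) := by
    have h' := phiR_int_add (Int.fract u) ⌊u⌋
    rw [show (Int.fract u + (⌊u⌋:ℝ)) = u by rw [Int.fract]; ring] at h'
    exact h'
  have h2 : phiR (2 * u) = phiR (2 * Int.fract u) := by
    have h' := phiR_int_add (2 * Int.fract u) (2 * ⌊u⌋)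
    rw [show (2 * Int.fract u + ((2 * ⌊u⌋:ℤ):ℝ)) = 2*u by rw [Int.fract]; push_cast; ring] at h'
    exact h'
  rw [h1, h2, key (Int.fract u) (Int.fract_nonneg u) (Int.fract_lt_one u)]

-- key two-level inequality: |χ b − χ a| ≤ 1 − 2|b−a| for a,b ∈ [0,1/2]
lemma chi_key {a b : ℝ} (ha0 : 0 ≤ a) (ha : a ≤ 1/2) (hb0 : 0 ≤ b) (hb : b ≤ 1/2) :
    |min (2*b) (1-2*b) - min (2*a) (1-2*a)| ≤ 1 - 2 * |b - a| := by
  rcases le_total (2*a) (1-2*a) with h1 | h1 <;>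
  rcases le_total (2*b) (1-2*b) with h2 | h2 <;>
  [rw [min_eq_left h1, min_eq_left h2]; rw [min_eq_left h1, min_eq_right h2];
   rw [min_eq_right h1, min_eq_left h2]; rw [min_eq_right h1, min_eq_right h2]] <;>
  rcases abs_cases (b - a) with ⟨he, _⟩ | ⟨he, _⟩ <;> rw [he, abs_le] <;>
  constructor <;> linarith

-- tail lemma: d_{j+1} ≤ 1 − 2 d_j , 0 ≤ d ≤ 1/2  ⇒  Σ c^j d_j ≤ 1/(3(1−c))
section tail
variable {c : ℝ} (hc : 1/2 ≤ c) (hc1 : c < 1)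

noncomputable def wseq (c : ℝ) : ℕ → ℝ
  | 0 => 1/2
  | (j+1) => c^(j+1)/2 - wseq c j / 2

lemma wseq_bounds (hc : 1/2 ≤ c) (hc1 : c < 1) : ∀ j, 0 ≤ wseq c j ∧ wseq c j ≤ c^j/2 := by
  intro j
  induction j with
  | zero => simp [wseq]
  | succ j ih =>
    have hcp : (0:ℝ) ≤ c := by linarith
    have h1 : c^(j+1) = c * c^j := by ring
    constructor
    · have : wseq c j ≤ c^j/2 := ih.2
      have : c^j/2 ≤ c^(j+1) := by
        rw [h1]; nlinarith [pow_nonneg hcp j]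
      simp only [wseq]; linarith [ih.2]
    · simp only [wseq]; linarith [ih.1]

lemma tail_sum_le {d : ℕ → ℝ} (hc : 1/2 ≤ c) (hc1 : c < 1)
    (hd0 : ∀ j, 0 ≤ d j) (hdh : ∀ j, d j ≤ 1/2) (hrec : ∀ j, d (j+1) ≤ 1 - 2 * d j) :
    ∑' j, c^j * d j ≤ 1/(3*(1-c)) := by
  have hcp : (0:ℝ) ≤ c := by linarith
  have ident : ∀ N, ∑ j ∈ Finset.range (N+1), c^j * (d j - 1/3) =
      (∑ j ∈ Finset.range (N+1), wseq c j * (2 * (d j - 1/3) + (d (j+1) - 1/3)))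
        - wseq c N * (d (N+1) - 1/3) := by
    intro N
    induction N with
    | zero => simp [wseq]; ring
    | succ N ih =>
      rw [Finset.sum_range_succ, ih,
        Finset.sum_range_succ (fun j => wseq c j * (2 * (d j - 1/3) + (d (j+1) - 1/3))) (N+1)]
      have hu : wseq c (N+1) = c^(N+1)/2 - wseq c N / 2 := rfl
      have hw : wseq c N + 2 * wseq c (N+1) = c^(N+1) := by rw [hu]; ring
      linear_combination (1/3 - d (N+1)) * hw
  have partial_le : ∀ N, ∑ j ∈ Finset.range (N+1), c^j * d j ≤
      (∑ j ∈ Finset.range (N+1), c^j * (1/3)) + c^N := by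
    intro N
    have h1 : ∑ j ∈ Finset.range (N+1), c^j * (d j - 1/3) ≤ c^N := by
      rw [ident N]
      have h2 : ∑ j ∈ Finset.range (N+1), wseq c j * (2 * (d j - 1/3) + (d (j+1) - 1/3)) ≤ 0 := by
        apply Finset.sum_nonpos
        intro j _
        apply mul_nonpos_of_nonneg_of_nonpos (wseq_bounds hc hc1 j).1
        have := hrec j; linarith
      have hw := wseq_bounds hc hc1 N
      have hp : 0 ≤ wseq c N * (d (N+1) - 1/3) + wseq c N / 3 := by
        nlinarith [mul_nonneg hw.1 (hd0 (N+1))]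
      linarith [hw.2, pow_nonneg hcp N]
    have h4 : ∑ j ∈ Finset.range (N+1), c^j * d j =
        (∑ j ∈ Finset.range (N+1), c^j * (1/3)) + ∑ j ∈ Finset.range (N+1), c^j * (d j - 1/3) := by
      rw [← Finset.sum_add_distrib]; congr 1; ext j; ring
    linarith
  have hsummable : Summable (fun j => c^j * d j) := by
    apply Summable.of_nonneg_of_le (fun j => mul_nonneg (pow_nonneg hcp j) (hd0 j))
      (fun j => ?_) (Summable.mul_right (1/2) (summable_geometric_of_lt_one hcp hc1))
    exact mul_le_mul_of_nonneg_left (hdh j) (pow_nonneg hcp j)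
  have hlim : Tendsto (fun N => ∑ j ∈ Finset.range (N+1), c^j * d j) atTop (nhds (∑' j, c^j * d j)) :=
    (hsummable.hasSum.tendsto_sum_nat).comp (tendsto_add_atTop_nat 1)
  have hgeom : Tendsto (fun N => (∑ j ∈ Finset.range (N+1), c^j * (1/3)) + c^N) atTop
      (nhds ((∑' j, c^j * (1/3)) + 0)) := by
    apply Tendsto.add
    · exact ((Summable.mul_right (1/3) (summable_geometric_of_lt_one hcp hc1)).hasSum.tendsto_sum_nat).comp
        (tendsto_add_atTop_nat 1)
    · exact tendsto_pow_atTop_nhds_zero_of_lt_one hcp hc1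
  have hfin := le_of_tendsto_of_tendsto' hlim hgeom partial_le
  have hg : (∑' j : ℕ, c^j * (1/3)) = 1/(3*(1-c)) := by
    rw [tsum_mul_right, tsum_geometric_of_lt_one hcp hc1]
    have h5 : (1:ℝ) - c ≠ 0 := by linarith
    field_simp
  rw [hg, add_zero] at hfin
  exact hfin

end tail

lemma e00_zero_left {x : ℝ} (h : x ≤ 0) : e00 x = 0 := by
  rw [e00, max_eq_right]
  exact le_trans (min_le_left _ _) h

lemma e00_zero_right {x : ℝ} (h : 1 ≤ x) : e00 x = 0 := by
  rw [e00, max_eq_right]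
  exact le_trans (min_le_right _ _) (by linarith)

lemma phiR_intCast (n : ℤ) : phiR (n : ℝ) = 0 := by
  have : phiR ((n:ℝ)) = phiR (0 + (n:ℤ)) := by norm_num
  rw [this, phiR_int_add, phiR_eq_min 0 le_rfl (by norm_num)]
  simp

lemma sum_e00_s8 (n : ℕ) (u : ℝ) (h0 : 0 ≤ u) (h1 : u ≤ n) :
    ∑ k ∈ Finset.range n, e00 (u - k) = phiR u := by
  rcases eq_or_lt_of_le h1 with heq | hlt
  · have hz : ∀ k ∈ Finset.range n, e00 (u - k) = 0 := by
      intro k hk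
      rw [Finset.mem_range] at hk
      apply e00_zero_right
      have : (k:ℝ) + 1 ≤ (n:ℝ) := by exact_mod_cast Nat.succ_le_of_lt hk
      rw [heq]; linarith
    rw [Finset.sum_eq_zero hz, heq]
    rw [show ((n:ℕ):ℝ) = ((n:ℤ):ℝ) by push_cast; ring, phiR_intCast]
  · have hK0 : (0:ℤ) ≤ ⌊u⌋ := Int.floor_nonneg.2 h0
    have hKn : ⌊u⌋ < (n:ℤ) := Int.floor_lt.2 (by exact_mod_cast hlt)
    have hfl : (⌊u⌋:ℝ) ≤ u := Int.floor_le u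
    have hfu : u < (⌊u⌋:ℝ) + 1 := Int.lt_floor_add_one u
    set K : ℕ := ⌊u⌋.toNat with hKdef
    have hKcast : (K : ℝ) = (⌊u⌋ : ℝ) := by
      rw [hKdef]; exact_mod_cast congrArg (Int.cast : ℤ → ℝ) (Int.toNat_of_nonneg hK0)
    have hKmem : K ∈ Finset.range n := by
      rw [Finset.mem_range]; omega
    rw [Finset.sum_eq_single K]
    · rw [hKcast]
      have hf0 : 0 ≤ u - (⌊u⌋:ℝ) := by linarith
      have hf1 : u - (⌊u⌋:ℝ) < 1 := by linarith
      have : e00 (u - (⌊u⌋:ℝ)) = min (u - ⌊u⌋) (1 - (u - ⌊u⌋)) := by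
        rw [e00, max_eq_left]
        apply le_min hf0 (by linarith)
      rw [this, ← phiR_eq_min _ hf0 hf1.le]
      have := phiR_int_add (u - (⌊u⌋:ℝ)) ⌊u⌋
      rw [show u - (⌊u⌋:ℝ) + (⌊u⌋:ℤ) = u by push_cast; ring] at this
      exact this.symm
    · intro k hk hne
      rw [Finset.mem_range] at hk
      rcases lt_or_gt_of_ne hne with hlt' | hgt
      · -- k < K : u - k ≥ 1
        apply e00_zero_right
        have : (k:ℝ) + 1 ≤ (K:ℝ) := by exact_mod_cast Nat.succ_le_of_lt hlt'
        rw [hKcast] at this; linarith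
      · -- k > K : u - k < 0
        apply e00_zero_left
        have : (K:ℝ) + 1 ≤ (k:ℝ) := by exact_mod_cast Nat.succ_le_of_lt hgt
        rw [hKcast] at this; linarith
    · intro h; exact absurd hKmem h

lemma tlTerm_one (H : ℝ) (m : ℕ) (t : ℝ) (h0 : 0 ≤ t) (h1 : t ≤ 1) :
    tlTerm H (fun _ _ => 1) m t = ((2:ℝ)^(-H : ℝ))^m * phiR ((2:ℝ)^m * t) := by
  have hsum : ∑ k ∈ Finset.range (2^m), (fun _ _ => (1:ℝ)) m k * fs m (k:ℤ) t
      = (2:ℝ)^(-(m:ℝ)/2) * phiR ((2:ℝ)^m * t) := by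
    have : ∀ k ∈ Finset.range (2^m), (fun _ _ => (1:ℝ)) m k * fs m (k:ℤ) t
        = (2:ℝ)^(-(m:ℝ)/2) * e00 ((2:ℝ)^m * t - (k:ℝ)) := by
      intro k _; simp [fs]
    rw [Finset.sum_congr rfl this, ← Finset.mul_sum]
    congr 1
    apply sum_e00_s8 (2^m) ((2:ℝ)^m * t) (by positivity)
    · have h2 : ((2^m : ℕ) : ℝ) = (2:ℝ)^m := by push_cast; ring
      rw [h2]
      nlinarith [pow_pos (show (0:ℝ) < 2 by norm_num) m]
  rw [tlTerm, hsum, ← mul_assoc]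
  congr 1
  rw [← Real.rpow_add (by norm_num : (0:ℝ) < 2)]
  rw [show (m:ℝ) * (1/2 - H) + (-(m:ℝ)/2) = (-H) * (m:ℝ) by ring]
  rw [Real.rpow_mul (by norm_num : (0:ℝ) ≤ 2), Real.rpow_natCast]

lemma summable_geom_mul {c : ℝ} (hcp : 0 ≤ c) (hc1 : c < 1) {f : ℕ → ℝ}
    (hf0 : ∀ m, 0 ≤ f m) (hfh : ∀ m, f m ≤ 1/2) : Summable (fun m => c^m * f m) := by
  apply Summable.of_nonneg_of_le (fun m => mul_nonneg (pow_nonneg hcp m) (hf0 m))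
    (fun m => mul_le_mul_of_nonneg_left (hfh m) (pow_nonneg hcp m))
    (Summable.mul_right (1/2) (summable_geometric_of_lt_one hcp hc1))

lemma xTL_eq (H : ℝ) (hH0 : 0 < H) (t : ℝ) (h0 : 0 ≤ t) (h1 : t ≤ 1) :
    xTL H t = ∑' m : ℕ, ((2:ℝ)^(-H : ℝ))^m * phiR ((2:ℝ)^m * t) := by
  rw [xTL]
  exact tsum_congr (fun m => tlTerm_one H m t h0 h1)

-- basic facts about c = 2^{-H}
lemma c_gt_half {H : ℝ} (hH1 : H < 1) : 1/2 < (2:ℝ)^(-H:ℝ) := by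
  have : (2:ℝ)^(-1:ℝ) < (2:ℝ)^(-H:ℝ) :=
    (Real.rpow_lt_rpow_left_iff (by norm_num)).2 (by linarith)
  rwa [Real.rpow_neg_one, show ((2:ℝ)⁻¹) = 1/2 by norm_num] at this

lemma c_lt_one {H : ℝ} (hH0 : 0 < H) : (2:ℝ)^(-H:ℝ) < 1 :=
  Real.rpow_lt_one_of_one_lt_of_neg (by norm_num) (by linarith)

lemma two_pow_sub_H {H : ℝ} : (2:ℝ)^(1-H:ℝ) = 2 * (2:ℝ)^(-H:ℝ) := by
  rw [show (1-H:ℝ) = 1 + (-H) by ring, Real.rpow_add (by norm_num : (0:ℝ) < 2),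
    Real.rpow_one]

lemma rpow_nat_mul' (a : ℝ) (n : ℕ) : (2:ℝ)^((n:ℝ)*a) = ((2:ℝ)^(a:ℝ))^n := by
  rw [mul_comm, Real.rpow_mul (by norm_num : (0:ℝ) ≤ 2), Real.rpow_natCast]

lemma nuFloor_ge_one {h : ℝ} (hh0 : 0 < h) (hh2 : h ≤ 1/2) : 1 ≤ nuFloor h := by
  rw [nuFloor, Int.le_floor]
  push_cast
  have h1 : Real.logb 2 h ≤ Real.logb 2 (1/2) :=
    Real.logb_le_logb_of_le (by norm_num) hh0 hh2
  have h2 : Real.logb 2 (1/2 : ℝ) = -1 := by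
    rw [show (1/2 : ℝ) = (2:ℝ)^(-1:ℝ) by rw [Real.rpow_neg_one]; norm_num,
      Real.logb_rpow (by norm_num) (by norm_num)]
  linarith [h1, h2.symm.le]

theorem increment_le (H : ℝ) (hH : H ∈ Set.Ioo (0:ℝ) 1) {t h : ℝ}
    (ht0 : 0 ≤ t) (hh0 : 0 < h) (hh2 : h ≤ 1/2) (hth : t + h ≤ 1) :
    |xTL H (t+h) - xTL H t| ≤ omegaH H h := by
  obtain ⟨hH0, hH1⟩ := hH
  set c : ℝ := (2:ℝ)^(-H:ℝ) with hcdef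
  have hc : 1/2 < c := c_gt_half hH1
  have hc1 : c < 1 := c_lt_one hH0
  have hcp : (0:ℝ) ≤ c := by linarith
  set d : ℕ → ℝ := fun m => |phiR ((2:ℝ)^m * (t+h)) - phiR ((2:ℝ)^m * t)| with hddef
  have hd0 : ∀ m, 0 ≤ d m := fun m => abs_nonneg _
  have hdh : ∀ m, d m ≤ 1/2 := by
    intro m
    rw [hddef, abs_sub_le_iff]
    constructor <;>
      linarith [phiR_nonneg ((2:ℝ)^m * (t+h)), phiR_le_half ((2:ℝ)^m * (t+h)),
        phiR_nonneg ((2:ℝ)^m * t), phiR_le_half ((2:ℝ)^m * t)]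
  have hdlip : ∀ m, d m ≤ (2:ℝ)^m * h := by
    intro m
    calc d m ≤ |(2:ℝ)^m * (t+h) - (2:ℝ)^m * t| := phiR_lipschitz _ _
      _ = (2:ℝ)^m * h := by
          rw [show (2:ℝ)^m * (t+h) - (2:ℝ)^m * t = (2:ℝ)^m * h by ring,
            abs_of_nonneg (by positivity)]
  have hdrec : ∀ m, d (m+1) ≤ 1 - 2 * d m := by
    intro m
    have e1 : (2:ℝ)^(m+1) * (t+h) = 2 * ((2:ℝ)^m * (t+h)) := by ring
    have e2 : (2:ℝ)^(m+1) * t = 2 * ((2:ℝ)^m * t) := by ring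
    rw [hddef]
    simp only [e1, e2, phiR_double]
    exact chi_key (phiR_nonneg _) (phiR_le_half _) (phiR_nonneg _) (phiR_le_half _)
  -- increment bounded by sum of c^m d m
  have hsum_d : Summable (fun m => c^m * d m) := summable_geom_mul hcp hc1 hd0 hdh
  have hsum_a : Summable (fun m => c^m * phiR ((2:ℝ)^m * (t+h))) :=
    summable_geom_mul hcp hc1 (fun m => phiR_nonneg _) (fun m => phiR_le_half _)
  have hsum_b : Summable (fun m => c^m * phiR ((2:ℝ)^m * t)) :=
    summable_geom_mul hcp hc1 (fun m => phiR_nonneg _) (fun m => phiR_le_half _)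
  have hstep1 : |xTL H (t+h) - xTL H t| ≤ ∑' m, c^m * d m := by
    rw [xTL_eq H hH0 (t+h) (by linarith) hth, xTL_eq H hH0 t ht0 (by linarith),
      ← Summable.tsum_sub hsum_a hsum_b]
    have heq : ∀ m : ℕ, c^m * phiR ((2:ℝ)^m * (t+h)) - c^m * phiR ((2:ℝ)^m * t)
        = c^m * (phiR ((2:ℝ)^m * (t+h)) - phiR ((2:ℝ)^m * t)) := fun m => by ring
    have hs2 : Summable (fun m => ‖c^m * phiR ((2:ℝ)^m * (t+h)) - c^m * phiR ((2:ℝ)^m * t)‖) := by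
      simp only [Real.norm_eq_abs, heq, abs_mul, abs_of_nonneg (pow_nonneg hcp _)]
      exact hsum_d
    have hnorm := norm_tsum_le_tsum_norm hs2
    simp only [Real.norm_eq_abs] at hnorm
    calc |∑' m, (c^m * phiR ((2:ℝ)^m * (t+h)) - c^m * phiR ((2:ℝ)^m * t))|
        ≤ ∑' m, |c^m * phiR ((2:ℝ)^m * (t+h)) - c^m * phiR ((2:ℝ)^m * t)| := hnorm
      _ = ∑' m, c^m * d m := by
          apply tsum_congr
          intro m
          rw [heq, abs_mul, abs_of_nonneg (pow_nonneg hcp _)]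
  -- split the sum
  have hnu : 1 ≤ nuFloor h := nuFloor_ge_one hh0 hh2
  set n : ℕ := (nuFloor h - 1).toNat with hndef
  have hncast : ((n:ℤ):ℝ) = (nuFloor h : ℝ) - 1 := by
    rw [hndef]
    rw [Int.toNat_of_nonneg (by omega)]
    push_cast; ring
  have hsplit : ∑' m, c^m * d m
      = (∑ m ∈ Finset.range n, c^m * d m) + ∑' j, c^(j+n) * d (j+n) :=
    (Summable.sum_add_tsum_nat_add n hsum_d).symm
  -- first part
  have hfirst : ∑ m ∈ Finset.range n, c^m * d m ≤ h * (2*c)^n / (2*c-1) := by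
    have hb : ∀ m ∈ Finset.range n, c^m * d m ≤ (2*c)^m * h := by
      intro m _
      calc c^m * d m ≤ c^m * ((2:ℝ)^m * h) :=
            mul_le_mul_of_nonneg_left (hdlip m) (pow_nonneg hcp m)
        _ = (2*c)^m * h := by rw [mul_pow]; ring
    calc ∑ m ∈ Finset.range n, c^m * d m ≤ ∑ m ∈ Finset.range n, (2*c)^m * h :=
          Finset.sum_le_sum hb
      _ = (∑ m ∈ Finset.range n, (2*c)^m) * h := by rw [← Finset.sum_mul]
      _ = (((2*c)^n - 1)/(2*c - 1)) * h := by
          rw [geom_sum_eq (show (2*c) ≠ 1 by intro hcon; linarith) n]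
      _ ≤ ((2*c)^n/(2*c - 1)) * h := by
          gcongr
          · linarith
          · linarith
      _ = h * (2*c)^n / (2*c-1) := by ring
  -- tail part
  have htail : ∑' j, c^(j+n) * d (j+n) ≤ c^n * (1/(3*(1-c))) := by
    have h1 : ∀ j : ℕ, c^(j+n) * d (j+n) = c^n * (c^j * d (j+n)) := fun j => by
      rw [pow_add]; ring
    rw [tsum_congr h1, tsum_mul_left]
    apply mul_le_mul_of_nonneg_left ?_ (pow_nonneg hcp n)
    exact tail_sum_le hc.le hc1 (fun j => hd0 _) (fun j => hdh _)
      (fun j => by simpa [show j+1+n = j+n+1 by omega] using hdrec (j+n))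
  -- match with omegaH
  have hnR : (nuFloor h : ℝ) - 1 = (n:ℝ) := by rw [← hncast]; push_cast; ring
  have homega : h * (2*c)^n / (2*c-1) + c^n * (1/(3*(1-c))) = omegaH H h := by
    rw [omegaH]
    have e1 : (2:ℝ)^(((nuFloor h : ℝ) - 1) * (1 - H)) = (2*c)^n := by
      rw [hnR, rpow_nat_mul', two_pow_sub_H]
    have e2 : (2:ℝ)^((1 - (nuFloor h : ℝ)) * H) = c^n := by
      rw [show (1 - (nuFloor h:ℝ)) * H = (n:ℝ) * (-H) by rw [show (1 - (nuFloor h:ℝ)) = -((nuFloor h:ℝ) - 1) by ring, hnR]; ring,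
        rpow_nat_mul']
    rw [e1, e2, two_pow_sub_H]
    ring
  calc |xTL H (t+h) - xTL H t| ≤ ∑' m, c^m * d m := hstep1
    _ = (∑ m ∈ Finset.range n, c^m * d m) + ∑' j, c^(j+n) * d (j+n) := hsplit
    _ ≤ h*(2*c)^n/(2*c-1) + c^n * (1/(3*(1-c))) := add_le_add hfirst htail
    _ = omegaH H h := homega

-- (a) nuFloor of 1/(3*2^n)
lemma pow2_mod3 (k : ℕ) : 2^(k+1) % 3 = 1 ∨ 2^(k+1) % 3 = 2 := by
  induction k with
  | zero => right; rfl
  | succ k ih =>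
    rcases ih with h | h <;> rw [pow_succ, Nat.mul_mod, h] <;> simp

lemma phiR_pow2_div3 (j : ℕ) : phiR ((2:ℝ)^(j+1)/3) = 1/3 := by
  set q : ℕ := 2^(j+1) / 3 with hq
  set r : ℕ := 2^(j+1) % 3 with hr
  have hdm : 3 * q + r = 2^(j+1) := Nat.div_add_mod _ _
  have hcast : (2:ℝ)^(j+1)/3 = (r:ℝ)/3 + (q:ℤ) := by
    have : ((2^(j+1) : ℕ) : ℝ) = 3*(q:ℝ) + (r:ℝ) := by exact_mod_cast hdm.symm
    push_cast at this ⊢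
    rw [show ((2:ℝ)^(j+1)) = 3*(q:ℝ) + r by exact_mod_cast this]
    ring
  rw [hcast, phiR_int_add]
  rcases pow2_mod3 j with h | h
  · rw [show r = 1 from h]
    push_cast
    rw [phiR_eq_self _ (by norm_num) (by norm_num)]
  · rw [show r = 2 from h]
    push_cast
    rw [phiR_eq_min _ (by norm_num) (by norm_num)]
    norm_num
lemma logb_two_three : Real.logb 2 3 < 2 ∧ 1 ≤ Real.logb 2 3 := by
  constructor
  · have : Real.logb 2 3 < Real.logb 2 4 :=
      Real.logb_lt_logb (by norm_num) (by norm_num) (by norm_num)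
    have h4 : Real.logb 2 4 = 2 := by
      rw [show (4:ℝ) = 2^(2:ℕ) by norm_num, Real.logb_pow,
        Real.logb_self_eq_one (by norm_num)]
      norm_num
    linarith
  · have : Real.logb 2 2 ≤ Real.logb 2 3 :=
      Real.logb_le_logb_of_le (by norm_num) (by norm_num) (by norm_num)
    rwa [Real.logb_self_eq_one (by norm_num)] at this

lemma nuFloor_hn (n : ℕ) : nuFloor (1/(3*2^n)) = n + 1 := by
  have h1 : -(Real.logb 2 (1/(3*2^n))) = Real.logb 2 3 + n := by
    rw [show (1/(3*2^n) : ℝ) = (3*2^n : ℝ)⁻¹ by ring, Real.logb_inv, neg_neg,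
      Real.logb_mul (by norm_num) (by positivity), Real.logb_pow,
      Real.logb_self_eq_one (by norm_num)]
    ring
  rw [nuFloor, h1]
  have := logb_two_three
  have : ⌊Real.logb 2 3 + (n:ℝ)⌋ = ⌊Real.logb 2 3⌋ + n := by
    exact_mod_cast Int.floor_add_intCast (Real.logb 2 3) n
  rw [this]
  have hfl : ⌊Real.logb 2 3⌋ = 1 := by
    have h2 := logb_two_three
    rw [Int.floor_eq_iff]
    constructor
    · exact_mod_cast h2.2
    · push_cast; linarith [h2.1]
  rw [hfl]; ring

lemma omega_hn (H : ℝ) (n : ℕ) :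
    omegaH H (1/(3*2^n)) = (1/(3*2^n)) * (2*(2:ℝ)^(-H:ℝ))^n / (2*(2:ℝ)^(-H:ℝ)-1)
      + ((2:ℝ)^(-H:ℝ))^n / (3*(1-(2:ℝ)^(-H:ℝ))) := by
  set c : ℝ := (2:ℝ)^(-H:ℝ) with hcdef
  rw [omegaH, nuFloor_hn n]
  have e0 : ((((n:ℤ) + 1 : ℤ)):ℝ) - 1 = (n:ℝ) := by push_cast; ring
  rw [show (((((n:ℤ)+1:ℤ)):ℝ) - 1) * (1 - H) = (n:ℝ)*(1-H) by rw [e0]]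
  rw [show (1 - ((((n:ℤ)+1:ℤ)):ℝ)) * H = (n:ℝ)*(-H) by push_cast; ring]
  rw [rpow_nat_mul', rpow_nat_mul', two_pow_sub_H]

lemma xTL_hn (H : ℝ) (hH : H ∈ Set.Ioo (0:ℝ) 1) (n : ℕ) :
    xTL H (1/(3*2^n)) = (1/(3*2^n)) * ((2*(2:ℝ)^(-H:ℝ))^(n+1) - 1) / (2*(2:ℝ)^(-H:ℝ)-1)
      + ((2:ℝ)^(-H:ℝ))^(n+1) / (3*(1-(2:ℝ)^(-H:ℝ))) := by
  obtain ⟨hH0, hH1⟩ := hH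
  set c : ℝ := (2:ℝ)^(-H:ℝ) with hcdef
  have hc : 1/2 < c := c_gt_half hH1
  have hc1 : c < 1 := c_lt_one hH0
  have hcp : (0:ℝ) ≤ c := by linarith
  set hn : ℝ := 1/(3*2^n) with hhndef
  have hnpos : 0 < hn := by rw [hhndef]; positivity
  have hnle : hn ≤ 1 := by
    rw [hhndef]
    rw [div_le_one (by positivity)]
    have : (1:ℝ) ≤ 2^n := one_le_pow₀ (by norm_num : (1:ℝ) ≤ 2)
    linarith
  rw [xTL_eq H hH0 hn hnpos.le hnle]
  have hsum : Summable (fun m => c^m * phiR ((2:ℝ)^m * hn)) :=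
    summable_geom_mul hcp hc1 (fun m => phiR_nonneg _) (fun m => phiR_le_half _)
  rw [← Summable.sum_add_tsum_nat_add (n+1) hsum]
  have hfirst : ∑ m ∈ Finset.range (n+1), c^m * phiR ((2:ℝ)^m * hn)
      = hn * ((2*c)^(n+1) - 1) / (2*c-1) := by
    have hterm : ∀ m ∈ Finset.range (n+1), c^m * phiR ((2:ℝ)^m * hn) = (2*c)^m * hn := by
      intro m hm
      rw [Finset.mem_range] at hm
      have hmn : m ≤ n := by omega
      have harg0 : (0:ℝ) ≤ (2:ℝ)^m * hn := by positivity
      have harg1 : (2:ℝ)^m * hn ≤ 1/2 := by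
        rw [hhndef]
        have h2 : (2:ℝ)^m ≤ 2^n := pow_le_pow_right₀ (by norm_num) hmn
        rw [show (2:ℝ)^m * (1/(3*2^n)) = (2:ℝ)^m / (3*2^n) by ring,
          div_le_iff₀ (by positivity)]
        nlinarith [pow_pos (show (0:ℝ) < 2 by norm_num) n]
      rw [phiR_eq_self _ harg0 harg1, mul_pow]
      ring
    rw [Finset.sum_congr rfl hterm, ← Finset.sum_mul,
      geom_sum_eq (show (2*c) ≠ 1 by intro hcon; linarith) (n+1)]
    ring
  have htail : ∑' j, c^(j+(n+1)) * phiR ((2:ℝ)^(j+(n+1)) * hn)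
      = c^(n+1) / (3*(1-c)) := by
    have hterm : ∀ j : ℕ, c^(j+(n+1)) * phiR ((2:ℝ)^(j+(n+1)) * hn)
        = c^(n+1) * (c^j * (1/3)) := by
      intro j
      have harg : (2:ℝ)^(j+(n+1)) * hn = (2:ℝ)^(j+1)/3 := by
        rw [hhndef]
        have h2n : (2:ℝ)^n ≠ 0 := by positivity
        field_simp
        rw [show j+(n+1) = (j+1)+n by omega, pow_add]
        ring
      rw [harg, phiR_pow2_div3 j, pow_add]
      ring
    rw [tsum_congr hterm, tsum_mul_left, tsum_mul_right,
      tsum_geometric_of_lt_one hcp hc1]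
    have : (1:ℝ) - c ≠ 0 := by linarith
    field_simp
  rw [hfirst, htail]

theorem stmt8 (H : ℝ) (hH : H ∈ Set.Ioo (0:ℝ) 1) :
    Filter.limsup (fun h : ℝ => ⨆ t : Set.Icc (0:ℝ) (1 - h),
        |xTL H ((t : ℝ) + h) - xTL H (t : ℝ)| / omegaH H h)
      (nhdsWithin 0 (Set.Ioi 0)) = 1 := by
  obtain ⟨hH0, hH1⟩ := hH
  set c : ℝ := (2:ℝ)^(-H:ℝ) with hcdef
  have hc : 1/2 < c := c_gt_half hH1
  have hc1 : c < 1 := c_lt_one hH0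
  have hcp : (0:ℝ) ≤ c := by linarith
  set F : ℝ → ℝ := fun h => ⨆ t : Set.Icc (0:ℝ) (1 - h),
      |xTL H ((t : ℝ) + h) - xTL H (t : ℝ)| / omegaH H h with hFdef
  set l : Filter ℝ := nhdsWithin 0 (Set.Ioi 0) with hldef
  -- positivity of omegaH
  have homega_pos : ∀ h : ℝ, 0 < h → 0 < omegaH H h := by
    intro h hh
    rw [omegaH]
    apply add_pos_of_nonneg_of_pos
    · apply div_nonneg
      · exact mul_nonneg hh.le (Real.rpow_nonneg (by norm_num) _)
      · rw [two_pow_sub_H]; linarith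
    · apply div_pos (Real.rpow_pos_of_pos (by norm_num) _)
      have : (2:ℝ)^(-H) = c := rfl
      rw [this]; linarith
  -- pointwise upper bound
  have hF_le : ∀ h : ℝ, 0 < h → h ≤ 1/2 → F h ≤ 1 := by
    intro h hh hh2
    have hne : Nonempty (Set.Icc (0:ℝ) (1-h)) := ⟨⟨0, ⟨le_rfl, by linarith⟩⟩⟩
    apply ciSup_le
    intro t
    rw [div_le_one (homega_pos h hh)]
    have ht := t.2
    rw [Set.mem_Icc] at ht
    exact increment_le H ⟨hH0, hH1⟩ ht.1 hh hh2 (by linarith [ht.2])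
  have hbdd_range : ∀ h : ℝ, 0 < h → h ≤ 1/2 →
      BddAbove (Set.range (fun t : Set.Icc (0:ℝ) (1-h) =>
        |xTL H ((t : ℝ) + h) - xTL H (t : ℝ)| / omegaH H h)) := by
    intro h hh hh2
    refine ⟨1, ?_⟩
    rintro x ⟨t, rfl⟩
    rw [div_le_one (homega_pos h hh)]
    have ht := t.2
    rw [Set.mem_Icc] at ht
    exact increment_le H ⟨hH0, hH1⟩ ht.1 hh hh2 (by linarith [ht.2])
  -- eventual bounds
  have h1 : ∀ᶠ h in l, h ∈ Set.Ioi (0:ℝ) :=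
    eventually_of_mem self_mem_nhdsWithin (fun x hx => hx)
  have h2 : ∀ᶠ h in l, h < 1/2 :=
    Filter.Eventually.filter_mono nhdsWithin_le_nhds
      (eventually_of_mem (Iio_mem_nhds (by norm_num)) (fun x hx => hx))
  have hev : ∀ᶠ h in l, F h ≤ 1 := by
    filter_upwards [h1, h2] with h hpos hlt
    exact hF_le h hpos hlt.le
  have hbdd : Filter.IsBoundedUnder (· ≤ ·) l F := ⟨1, by simpa using hev⟩
  -- the sequence h_n = 1/(3 2^n)
  set hseq : ℕ → ℝ := fun n => 1/(3*2^n) with hseqdef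
  have hseq_pos : ∀ n, 0 < hseq n := fun n => by rw [hseqdef]; positivity
  have hseq_half : ∀ n, hseq n ≤ 1/2 := by
    intro n
    rw [hseqdef]
    have h2 : (1:ℝ) ≤ 2^n := one_le_pow₀ (by norm_num)
    rw [div_le_div_iff₀ (by positivity) (by norm_num)]
    linarith
  have hseq_tendsto : Filter.Tendsto hseq atTop l := by
    rw [hldef, tendsto_nhdsWithin_iff]
    constructor
    · have : hseq = fun n => (1/3 : ℝ) * (1/2)^n := by
        funext n; rw [hseqdef]; field_simp; rw [← mul_pow]; norm_num
      rw [this]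
      have := (tendsto_pow_atTop_nhds_zero_of_lt_one (by norm_num : (0:ℝ) ≤ 1/2)
        (by norm_num)).const_mul (1/3 : ℝ)
      simpa using this
    · exact Filter.Eventually.of_forall (fun n => hseq_pos n)
  -- lower bound for F (hseq n)
  have hxTL0 : xTL H 0 = 0 := by
    rw [xTL_eq H hH0 0 le_rfl (by norm_num)]
    have : ∀ m : ℕ, ((2:ℝ)^(-H:ℝ))^m * phiR ((2:ℝ)^m * 0) = 0 := by
      intro m
      rw [mul_zero, phiR_eq_self 0 le_rfl (by norm_num), mul_zero]
    rw [tsum_congr this, tsum_zero]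
  have hxTL_nonneg : ∀ n, 0 ≤ xTL H (hseq n) := by
    intro n
    rw [hseqdef, xTL_eq H hH0 _ (by positivity) ?_]
    · exact tsum_nonneg fun m => mul_nonneg (pow_nonneg hcp m) (phiR_nonneg _)
    · have := hseq_half n; rw [hseqdef] at this; linarith
  have hdelta : ∀ n : ℕ, omegaH H (hseq n) - xTL H (hseq n) = hseq n / (2*c-1) := by
    intro n
    rw [hseqdef]
    rw [omega_hn, xTL_hn H ⟨hH0, hH1⟩ n]
    have h2n : ((2:ℝ)^n) ≠ 0 := by positivity
    have hd1 : 2*c - 1 ≠ 0 := by linarith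
    have hd2 : (1:ℝ) - c ≠ 0 := by linarith
    simp only [← hcdef]
    field_simp
    ring
  have homega_lb : ∀ n : ℕ, c^n / (3*(1-c)) ≤ omegaH H (hseq n) := by
    intro n
    rw [hseqdef, omega_hn]
    have : 0 ≤ (1/(3*2^n)) * (2*c)^n / (2*c-1) := by
      apply div_nonneg _ (by linarith)
      positivity
    linarith
  have hFn : ∀ n : ℕ, 1 - ((1-c)/(2*c-1)) * (1/(2*c))^n ≤ F (hseq n) := by
    intro n
    have h0mem : (0:ℝ) ∈ Set.Icc (0:ℝ) (1 - hseq n) := by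
      rw [Set.mem_Icc]
      constructor
      · exact le_rfl
      · have := hseq_half n; linarith
    have hle : 1 - ((1-c)/(2*c-1)) * (1/(2*c))^n ≤
        |xTL H ((0:ℝ) + hseq n) - xTL H 0| / omegaH H (hseq n) := by
      rw [hxTL0, zero_add, sub_zero, abs_of_nonneg (hxTL_nonneg n)]
      have hom := homega_pos _ (hseq_pos n)
      rw [le_div_iff₀ hom]
      have hx : xTL H (hseq n) = omegaH H (hseq n) - hseq n / (2*c-1) := by
        have := hdelta n; linarith
      rw [hx]
      have hkey : ((1-c)/(2*c-1)) * (1/(2*c))^n * omegaH H (hseq n) ≥ hseq n / (2*c-1) := by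
        have hlb := homega_lb n
        have hpos1 : (0:ℝ) < ((1-c)/(2*c-1)) * (1/(2*c))^n := by
          apply mul_pos (div_pos (by linarith) (by linarith))
          positivity
        calc hseq n / (2*c-1) = ((1-c)/(2*c-1)) * (1/(2*c))^n * (c^n / (3*(1-c))) := by
              rw [hseqdef]
              have h2n : ((2:ℝ)^n) ≠ 0 := by positivity
              have hcn : (c:ℝ)^n ≠ 0 := by positivity
              have hd1 : 2*c - 1 ≠ 0 := by linarith
              have hd2 : (1:ℝ) - c ≠ 0 := by linarith
              rw [div_pow, one_pow, mul_pow]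
              field_simp
          _ ≤ ((1-c)/(2*c-1)) * (1/(2*c))^n * omegaH H (hseq n) :=
              mul_le_mul_of_nonneg_left hlb hpos1.le
      nlinarith [homega_pos _ (hseq_pos n)]
    calc 1 - ((1-c)/(2*c-1)) * (1/(2*c))^n
        ≤ |xTL H ((0:ℝ) + hseq n) - xTL H 0| / omegaH H (hseq n) := hle
      _ ≤ F (hseq n) := by
          apply le_ciSup_of_le (hbdd_range _ (hseq_pos n) (hseq_half n)) ⟨0, h0mem⟩
          exact le_rfl
  -- conclude
  have hub : Filter.limsup F l ≤ 1 := by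
    apply Filter.limsup_le_of_le ?_ hev
    apply Filter.IsCoboundedUnder.of_frequently_ge (a := 1 - (1-c)/(2*c-1))
    apply hseq_tendsto.frequently
    apply Filter.Frequently.of_forall
    intro n
    have hθ : (1/(2*c))^n ≤ 1 :=
      pow_le_one₀ (by positivity) (by rw [div_le_one (by linarith)]; linarith)
    have hK : (0:ℝ) ≤ (1-c)/(2*c-1) := le_of_lt (div_pos (by linarith) (by linarith))
    have hm := mul_le_mul_of_nonneg_left hθ hK
    have := hFn n
    rw [mul_one] at hm
    linarith
  have hlb : 1 ≤ Filter.limsup F l := by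
    have key : ∀ ε : ℝ, 0 < ε → 1 - ε ≤ Filter.limsup F l := by
      intro ε hε
      apply Filter.le_limsup_of_frequently_le ?_ hbdd
      have hKθ : Filter.Tendsto (fun n : ℕ => ((1-c)/(2*c-1)) * (1/(2*c))^n) atTop (nhds 0) := by
        have h12c : (0:ℝ) ≤ 1/(2*c) := by positivity
        have h12c' : (1:ℝ)/(2*c) < 1 := by rw [div_lt_one (by linarith)]; linarith
        have := (tendsto_pow_atTop_nhds_zero_of_lt_one h12c h12c').const_mul ((1-c)/(2*c-1))
        simpa using this
      have hev2 : ∀ᶠ n in atTop, 1 - ε ≤ F (hseq n) := by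
        have : ∀ᶠ n in atTop, ((1-c)/(2*c-1)) * (1/(2*c))^n < ε := by
          have := hKθ.eventually_lt_const hε
          simpa using this
        filter_upwards [this] with n hn
        have := hFn n
        linarith
      exact hseq_tendsto.frequently hev2.frequently
    by_contra hcon
    push_neg at hcon
    have := key ((1 - Filter.limsup F l)/2) (by linarith)
    linarith
  linarith
end
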